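/- Let n > 2, T, k be integers with 0 < T <= n(n-1)/2, and define for integer k in [0, T] the function f_k(x) = (k + T(n+1) - x) * x^{n-1} on the interval [k(n+1), (k+1)(n+1)]. Define f on [0, T(n+1)] piecewise by f(x) = f_k(x) for x in [k(n+1), (k+1)(n+1)). Then the unique maximizer of f on [0, T(n+1)] is x = T(n+1), with value T^n (n+1)^{n-1}. -/

import Mathlib

set_option maxHeartbeats 1000000

/-- Cubic Bernoulli: `(1+t)^n ≥ 1 + nt + C(n,2)t² + C(n,3)t³` for `t ≥ 0`. -/
lemma bern3 (n : ℕ) (t : ℝ) (ht : 0 ≤ t) :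
    1 + (n : ℝ) * t + (n : ℝ) * ((n : ℝ) - 1) / 2 * t ^ 2
      + (n : ℝ) * ((n : ℝ) - 1) * ((n : ℝ) - 2) / 6 * t ^ 3 ≤ (1 + t) ^ n := by
  induction n with
  | zero => norm_num
  | succ m ih =>
    have h1 : (0 : ℝ) ≤ (m : ℝ) * ((m : ℝ) - 1) * ((m : ℝ) - 2) := by
      rcases m with _ | _ | k
      · norm_num
      · norm_num
      · have hk : (0 : ℝ) ≤ (k : ℝ) := Nat.cast_nonneg k
        push_cast
        nlinarith [mul_nonneg (mul_nonneg hk hk) hk, mul_nonneg hk hk, hk]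
    have h2 : (1 + (m : ℝ) * t + (m : ℝ) * ((m : ℝ) - 1) / 2 * t ^ 2
        + (m : ℝ) * ((m : ℝ) - 1) * ((m : ℝ) - 2) / 6 * t ^ 3) * (1 + t)
        ≤ (1 + t) ^ m * (1 + t) :=
      mul_le_mul_of_nonneg_right ih (by linarith)
    have h3 : 1 + ((m : ℝ) + 1) * t + ((m : ℝ) + 1) * (((m : ℝ) + 1) - 1) / 2 * t ^ 2
        + ((m : ℝ) + 1) * (((m : ℝ) + 1) - 1) * (((m : ℝ) + 1) - 2) / 6 * t ^ 3
        = (1 + (m : ℝ) * t + (m : ℝ) * ((m : ℝ) - 1) / 2 * t ^ 2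
            + (m : ℝ) * ((m : ℝ) - 1) * ((m : ℝ) - 2) / 6 * t ^ 3) * (1 + t)
          - (m : ℝ) * ((m : ℝ) - 1) * ((m : ℝ) - 2) / 6 * t ^ 4 := by ring
    rw [pow_succ (1 + t) m]
    push_cast
    rw [h3]
    have h4 : 0 ≤ (m : ℝ) * ((m : ℝ) - 1) * ((m : ℝ) - 2) / 6 * t ^ 4 :=
      mul_nonneg (div_nonneg h1 (by norm_num)) (pow_nonneg ht 4)
    linarith

/-- The key inequality `(n+1)(n²-2)^n < (n-1)(n²)^n` for `n ≥ 3`. -/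
lemma lemC (n : ℕ) (hn : 3 ≤ n) :
    ((n : ℝ) + 1) * ((n : ℝ) ^ 2 - 2) ^ n < ((n : ℝ) - 1) * ((n : ℝ) ^ 2) ^ n := by
  have hN : (3 : ℝ) ≤ (n : ℝ) := by exact_mod_cast hn
  set N : ℝ := (n : ℝ) with hNdef
  have hd : 0 < N ^ 2 - 2 := by nlinarith
  set t : ℝ := 2 / (N ^ 2 - 2) with htdef
  have ht : 0 ≤ t := by positivity
  have h1 : (1 + t) * (N ^ 2 - 2) = N ^ 2 := by
    rw [htdef]; field_simp; ring
  have hb := bern3 n t ht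
  have hcube : (0 : ℝ) < 3 * (N ^ 2 - 2) ^ 3 := by positivity
  have key : (N + 1) < (N - 1) * (1 + N * t + N * (N - 1) / 2 * t ^ 2
      + N * (N - 1) * (N - 2) / 6 * t ^ 3) := by
    have heq : (N - 1) * (1 + N * t + N * (N - 1) / 2 * t ^ 2
        + N * (N - 1) * (N - 2) / 6 * t ^ 3) - (N + 1)
        = ((N - 1) * (3 * (N ^ 2 - 2) ^ 3 + 6 * N * (N ^ 2 - 2) ^ 2
            + 6 * N * (N - 1) * (N ^ 2 - 2) + 4 * N * (N - 1) * (N - 2))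
          - (N + 1) * (3 * (N ^ 2 - 2) ^ 3)) / (3 * (N ^ 2 - 2) ^ 3) := by
      rw [htdef]
      field_simp
      ring
    have hs : (0 : ℝ) ≤ N - 3 := by linarith
    have hpoly : 0 < (N - 1) * (3 * (N ^ 2 - 2) ^ 3 + 6 * N * (N ^ 2 - 2) ^ 2
        + 6 * N * (N - 1) * (N ^ 2 - 2) + 4 * N * (N - 1) * (N - 2))
        - (N + 1) * (3 * (N ^ 2 - 2) ^ 3) := by
      nlinarith [mul_nonneg hs hs, mul_nonneg (mul_nonneg hs hs) hs,
        mul_nonneg (mul_nonneg (mul_nonneg hs hs) hs) hs]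
    have := div_pos hpoly hcube
    rw [← heq] at this
    linarith
  have hpos : 0 < (N ^ 2 - 2) ^ n := by positivity
  calc (N + 1) * (N ^ 2 - 2) ^ n
      < ((N - 1) * (1 + N * t + N * (N - 1) / 2 * t ^ 2
          + N * (N - 1) * (N - 2) / 6 * t ^ 3)) * (N ^ 2 - 2) ^ n :=
        (mul_lt_mul_of_pos_right key hpos)
    _ ≤ ((N - 1) * (1 + t) ^ n) * (N ^ 2 - 2) ^ n := by
        have hN1 : (0 : ℝ) ≤ N - 1 := by linarith
        exact mul_le_mul_of_nonneg_right (mul_le_mul_of_nonneg_left hb hN1) hpos.le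
    _ = (N - 1) * ((1 + t) * (N ^ 2 - 2)) ^ n := by rw [mul_pow]; ring
    _ = (N - 1) * (N ^ 2) ^ n := by rw [h1]

/-- Bernoulli in product form: `v^(K+1) + (K+1)(u-v)v^K ≤ u^(K+1)` for `v > 0`, `u ≥ 0`. -/
lemma bern_pow (K : ℕ) (u v : ℝ) (hv : 0 < v) (hu : 0 ≤ u) :
    v ^ (K + 1) + ((K : ℝ) + 1) * (u - v) * v ^ K ≤ u ^ (K + 1) := by
  have ha : (-2 : ℝ) ≤ (u - v) / v := by
    have h0 : (0 : ℝ) ≤ u / v := div_nonneg hu hv.le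
    have he : (u - v) / v = u / v - 1 := by field_simp
    linarith
  have hb := one_add_mul_le_pow ha (K + 1)
  have h := mul_le_mul_of_nonneg_right hb (pow_nonneg hv.le (K + 1))
  have h1 : (1 + ((K : ℝ) + 1) * ((u - v) / v)) * v ^ (K + 1)
      = v ^ (K + 1) + ((K : ℝ) + 1) * (u - v) * v ^ K := by
    rw [pow_succ]
    field_simp
  have h2 : (1 + (u - v) / v) ^ (K + 1) * v ^ (K + 1) = u ^ (K + 1) := by
    rw [show 1 + (u - v) / v = u / v from by field_simp; ring, div_pow]
    field_simp
  push_cast at h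
  rw [h1, h2] at h
  exact h

/-- AM-GM step: `(c-x)x^(m+2) ≤ (m+2)^(m+2) c^(m+3) / (m+3)^(m+3)`. -/
lemma stepA (m : ℕ) (c x : ℝ) (hx : 0 ≤ x) (hxc : x ≤ c) :
    (c - x) * x ^ (m + 2) ≤ ((m : ℝ) + 2) ^ (m + 2) * c ^ (m + 3) / ((m : ℝ) + 3) ^ (m + 3) := by
  have hc : 0 ≤ c := hx.trans hxc
  rcases eq_or_lt_of_le hx with h0 | hxpos
  · rw [← h0, zero_pow (by omega : m + 2 ≠ 0), mul_zero]
    positivity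
  · have hv : 0 < ((m : ℝ) + 3) * x := by positivity
    have hu : 0 ≤ ((m : ℝ) + 2) * c := by positivity
    have key := bern_pow (m + 2) (((m : ℝ) + 2) * c) (((m : ℝ) + 3) * x) hv hu
    push_cast at key
    have hid : (((m : ℝ) + 3) * x) ^ (m + 2 + 1)
        + ((m : ℝ) + 2 + 1) * (((m : ℝ) + 2) * c - ((m : ℝ) + 3) * x) * (((m : ℝ) + 3) * x) ^ (m + 2)
        = (((m : ℝ) + 2) * (((m : ℝ) + 3) ^ (m + 3))) * ((c - x) * x ^ (m + 2)) := by
      rw [mul_pow, mul_pow, pow_succ, pow_succ]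
      ring
    rw [hid] at key
    have hexp : (((m : ℝ) + 2) * c) ^ (m + 2 + 1)
        = ((m : ℝ) + 2) * (((m : ℝ) + 2) ^ (m + 2) * c ^ (m + 3)) := by
      rw [mul_pow, pow_succ]
      ring
    rw [hexp] at key
    have hm2 : (0 : ℝ) < (m : ℝ) + 2 := by positivity
    rw [le_div_iff₀ (by positivity : (0 : ℝ) < ((m : ℝ) + 3) ^ (m + 3))]
    nlinarith [key]

/-- Key strict bound. -/
lemma keylem (m : ℕ) (Tr c : ℝ) (hT1 : 1 ≤ Tr) (hc0 : 0 ≤ c)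
    (hcb : c ≤ Tr * ((m : ℝ) + 5) - 1) (h2T : 2 * Tr ≤ ((m : ℝ) + 3) * ((m : ℝ) + 2)) :
    ((m : ℝ) + 2) ^ (m + 2) * c ^ (m + 3) / ((m : ℝ) + 3) ^ (m + 3)
      < Tr ^ (m + 3) * ((m : ℝ) + 4) ^ (m + 2) := by
  have hm0 : (0 : ℝ) ≤ (m : ℝ) := Nat.cast_nonneg m
  have hpow3 : (0 : ℝ) < ((m : ℝ) + 3) ^ (m + 3) := by positivity
  rw [div_lt_iff₀ hpow3]
  obtain ⟨N, hN⟩ : ∃ N : ℝ, N = (m : ℝ) + 3 := ⟨_, rfl⟩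
  have e2 : (m : ℝ) + 2 = N - 1 := by rw [hN]; ring
  have e3 : (m : ℝ) + 3 = N := by rw [hN]
  have e4 : (m : ℝ) + 4 = N + 1 := by rw [hN]; ring
  have e5 : (m : ℝ) + 5 = N + 2 := by rw [hN]; ring
  rw [e2, e3, e4]
  rw [e5] at hcb
  rw [e2, e3] at h2T
  have hN3 : (3 : ℝ) ≤ N := by rw [hN]; linarith
  have hN1 : (0 : ℝ) < N - 1 := by linarith
  have hNpos : (0 : ℝ) < N := by linarith
  -- bound c·N(N-1) by Tr(N+1)(N²-2)
  have hD : c * (N * (N - 1)) ≤ Tr * (N + 1) * (N ^ 2 - 2) := by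
    have h1 : c * (N * (N - 1)) ≤ (Tr * (N + 2) - 1) * (N * (N - 1)) :=
      mul_le_mul_of_nonneg_right hcb (by positivity)
    nlinarith [h2T, hNpos, hN1]
  have hNN0 : (0 : ℝ) ≤ N * (N - 1) := by positivity
  have hcN : (c * (N * (N - 1))) ^ (m + 3) ≤ (Tr * (N + 1) * (N ^ 2 - 2)) ^ (m + 3) :=
    pow_le_pow_left₀ (mul_nonneg hc0 hNN0) hD (m + 3)
  have hC := lemC (m + 3) (by omega)
  have hcst : ((m + 3 : ℕ) : ℝ) = N := by rw [hN]; push_cast; ring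
  rw [hcst] at hC
  have hposfac : (0 : ℝ) < Tr ^ (m + 3) * (N + 1) ^ (m + 2) * (N - 1) ^ (m + 2) := by positivity
  have hmul := mul_lt_mul_of_pos_left hC hposfac
  have hL : Tr ^ (m + 3) * (N + 1) ^ (m + 2) * (N - 1) ^ (m + 2)
      * ((N + 1) * (N ^ 2 - 2) ^ (m + 3))
      = (N - 1) ^ (m + 2) * (Tr * (N + 1) * (N ^ 2 - 2)) ^ (m + 3) := by
    rw [mul_pow, mul_pow]
    ring
  have hsq : (N ^ 2) ^ (m + 3) = N ^ (m + 3) * N ^ (m + 3) := by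
    rw [← pow_add, ← pow_mul]
    congr 1
    omega
  have hR : Tr ^ (m + 3) * (N + 1) ^ (m + 2) * (N - 1) ^ (m + 2)
      * ((N - 1) * (N ^ 2) ^ (m + 3))
      = Tr ^ (m + 3) * (N + 1) ^ (m + 2) * N ^ (m + 3) * (N * (N - 1)) ^ (m + 3) := by
    rw [hsq, mul_pow]
    ring
  rw [hL, hR] at hmul
  have hNNpow : (0 : ℝ) < (N * (N - 1)) ^ (m + 3) := by positivity
  have hchain : (N - 1) ^ (m + 2) * c ^ (m + 3) * (N * (N - 1)) ^ (m + 3)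
      < Tr ^ (m + 3) * (N + 1) ^ (m + 2) * N ^ (m + 3) * (N * (N - 1)) ^ (m + 3) := by
    calc (N - 1) ^ (m + 2) * c ^ (m + 3) * (N * (N - 1)) ^ (m + 3)
        = (N - 1) ^ (m + 2) * (c * (N * (N - 1))) ^ (m + 3) := by
          rw [mul_pow c (N * (N - 1)) (m + 3), mul_assoc]
      _ ≤ (N - 1) ^ (m + 2) * (Tr * (N + 1) * (N ^ 2 - 2)) ^ (m + 3) :=
          mul_le_mul_of_nonneg_left hcN (by positivity)
      _ < _ := hmul
  have hfin := lt_of_mul_lt_mul_right hchain hNNpow.le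
  calc (N - 1) ^ (m + 2) * c ^ (m + 3)
      < Tr ^ (m + 3) * (N + 1) ^ (m + 2) * N ^ (m + 3) := hfin
    _ = Tr ^ (m + 3) * (N + 1) ^ (m + 2) * N ^ (m + 3) := rfl

theorem stmt_18 (n T : ℕ) (hn : 2 < n) (hT : 0 < T) (hTn : T ≤ n * (n - 1) / 2)
    (f : ℝ → ℝ)
    (hf : ∀ x : ℝ, 0 ≤ x → x ≤ (T : ℝ) * ((n : ℝ) + 1) →
      f x = ((⌊x / ((n : ℝ) + 1)⌋₊ : ℝ) + (T : ℝ) * ((n : ℝ) + 1) - x) * x ^ (n - 1)) :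
    f ((T : ℝ) * ((n : ℝ) + 1)) = (T : ℝ) ^ n * ((n : ℝ) + 1) ^ (n - 1) ∧
    ∀ x ∈ Set.Icc (0 : ℝ) ((T : ℝ) * ((n : ℝ) + 1)),
      x ≠ (T : ℝ) * ((n : ℝ) + 1) → f x < f ((T : ℝ) * ((n : ℝ) + 1)) := by
  obtain ⟨m, rfl⟩ : ∃ m, n = m + 3 := ⟨n - 3, by omega⟩
  have hsub : m + 3 - 1 = m + 2 := rfl
  have hNpos : (0 : ℝ) < ((m + 3 : ℕ) : ℝ) + 1 := by positivity
  have hT1 : (1 : ℝ) ≤ (T : ℝ) := by exact_mod_cast hT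
  have hMnn : (0 : ℝ) ≤ (T : ℝ) * (((m + 3 : ℕ) : ℝ) + 1) := by positivity
  have hfloorM : ⌊((T : ℝ) * (((m + 3 : ℕ) : ℝ) + 1)) / (((m + 3 : ℕ) : ℝ) + 1)⌋₊ = T := by
    rw [mul_div_cancel_right₀ _ (ne_of_gt hNpos), Nat.floor_natCast]
  have hval : f ((T : ℝ) * (((m + 3 : ℕ) : ℝ) + 1))
      = (T : ℝ) ^ (m + 3) * (((m + 3 : ℕ) : ℝ) + 1) ^ (m + 3 - 1) := by
    rw [hf _ hMnn le_rfl, hfloorM, hsub]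
    rw [mul_pow, pow_succ (T : ℝ) (m + 2)]
    ring
  refine ⟨hval, ?_⟩
  rintro x ⟨hx0, hxM⟩ hne
  have hxlt : x < (T : ℝ) * (((m + 3 : ℕ) : ℝ) + 1) := lt_of_le_of_ne hxM hne
  rw [hval, hf x hx0 hxM, hsub]
  set k : ℕ := ⌊x / (((m + 3 : ℕ) : ℝ) + 1)⌋₊ with hkdef
  have hkT : k < T := by
    rw [hkdef, Nat.floor_lt (div_nonneg hx0 hNpos.le), div_lt_iff₀ hNpos]
    exact hxlt
  have hkTR : (k : ℝ) ≤ (T : ℝ) - 1 := by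
    have : (k : ℝ) + 1 ≤ (T : ℝ) := by exact_mod_cast hkT
    linarith
  set c : ℝ := (k : ℝ) + (T : ℝ) * (((m + 3 : ℕ) : ℝ) + 1) with hcdef
  have hxc : x ≤ c := by
    have : (0 : ℝ) ≤ (k : ℝ) := Nat.cast_nonneg k
    linarith
  have hc0 : (0 : ℝ) ≤ c := hx0.trans hxc
  have hA : (c - x) * x ^ (m + 2)
      ≤ ((m : ℝ) + 2) ^ (m + 2) * c ^ (m + 3) / ((m : ℝ) + 3) ^ (m + 3) :=
    stepA m c x hx0 hxc
  have h2T : 2 * T ≤ (m + 3) * (m + 2) := by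
    have h : T ≤ (m + 3) * (m + 2) / 2 := by rwa [hsub] at hTn
    have := (Nat.le_div_iff_mul_le (by norm_num : 0 < 2)).mp h
    omega
  have h2TR : 2 * (T : ℝ) ≤ ((m : ℝ) + 3) * ((m : ℝ) + 2) := by exact_mod_cast h2T
  have hcbound : c ≤ (T : ℝ) * ((m : ℝ) + 5) - 1 := by
    rw [hcdef]
    push_cast
    linarith
  have hkey := keylem m (T : ℝ) c hT1 hc0 hcbound h2TR
  have hcast4 : (((m + 3 : ℕ) : ℝ) + 1) ^ (m + 2) = ((m : ℝ) + 4) ^ (m + 2) := by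
    push_cast; ring_nf
  have hgoal : ((k : ℝ) + (T : ℝ) * (((m + 3 : ℕ) : ℝ) + 1) - x) * x ^ (m + 2)
      = (c - x) * x ^ (m + 2) := by rw [hcdef]
  rw [hgoal, hcast4]
  exact lt_of_le_of_lt hA hkey
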